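/- Let r be a regular reward function, and let s > 1. Define κ̄_s(x) := κ_s(max(x, τ_s)) for x ≥ 0. Then: (i) 0 ≤ κ̄_s(x) < x for every x > 0; and (ii) κ̄_s is continuous, nondecreasing, and convex on [0,∞). -/

import Mathlib

open Set Filter MeasureTheory

/-- A regular reward function `r` with derivative `r'`: `r : [0,∞) → [0,∞)` is
nondecreasing, Lipschitz, strictly concave, differentiable, with `r 0 = 0`; its
derivative `r'` is continuous, strictly decreasing, positive, and tends to `0` at `+∞`.
For each `s ≥ 1`, `τ s` is the unique point with `r' (τ s) = r' 0 / s`, and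
`κ s : [τ s, ∞) → [0, ∞)` is defined by the relation `r' (κ s x) = s * r' x`
(for `s = 1` these reduce to `τ 1 = 0` and `κ 1 = id`); regularity means `κ s` is
convex on `[τ s, ∞)` for all `s > 1`. -/
structure RegularReward where
  r : ℝ → ℝ
  r' : ℝ → ℝ
  r_zero : r 0 = 0
  r_nonneg : ∀ x : ℝ, 0 ≤ x → 0 ≤ r x
  r_mono : MonotoneOn r (Ici (0 : ℝ))
  r_lip : ∃ K : NNReal, LipschitzOnWith K r (Ici (0 : ℝ))
  r_strictConcave : StrictConcaveOn ℝ (Ici (0 : ℝ)) r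
  r_hasDeriv : ∀ x : ℝ, 0 ≤ x → HasDerivWithinAt r (r' x) (Ici (0 : ℝ)) x
  deriv_cont : ContinuousOn r' (Ici (0 : ℝ))
  deriv_strictAnti : StrictAntiOn r' (Ici (0 : ℝ))
  deriv_pos : ∀ x : ℝ, 0 ≤ x → 0 < r' x
  deriv_tendsto_zero : Tendsto r' atTop (nhds 0)
  τ : ℝ → ℝ
  κ : ℝ → ℝ → ℝ
  τ_nonneg : ∀ s : ℝ, 1 ≤ s → 0 ≤ τ s
  τ_spec : ∀ s : ℝ, 1 ≤ s → r' (τ s) = r' 0 / s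
  κ_nonneg : ∀ s : ℝ, 1 ≤ s → ∀ x : ℝ, τ s ≤ x → 0 ≤ κ s x
  κ_spec : ∀ s : ℝ, 1 ≤ s → ∀ x : ℝ, τ s ≤ x → r' (κ s x) = s * r' x
  κ_convex : ∀ s : ℝ, 1 < s → ConvexOn ℝ (Ici (τ s)) (κ s)

namespace RegularReward

/-- The extension `κ̄_s (x) := κ_s (max x τ_s)` of `κ_s` to `[0, ∞)`. -/
noncomputable def kbar (R : RegularReward) (s : ℝ) (x : ℝ) : ℝ :=
  R.κ s (max x (R.τ s))

/-- `M_s(x) = ⌈ln (r' 0 / r' x) / ln s⌉`. -/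
noncomputable def M (R : RegularReward) (s : ℝ) (x : ℝ) : ℕ :=
  ⌈Real.log (R.r' 0 / R.r' x) / Real.log s⌉₊

/-- `M̃_s(x) = ⌊ln (r' 0 / r' x) / ln s⌋ + 1`. -/
noncomputable def Mt (R : RegularReward) (s : ℝ) (x : ℝ) : ℕ :=
  ⌊Real.log (R.r' 0 / R.r' x) / Real.log s⌋₊ + 1

/-- `η_s(x) := ∑_{i=1}^∞ κ̄_s^{(i-1)}(x)`, a finite sum since `κ̄_s^{(i)}(x) = 0` for
`i ≥ M_s(x)`. -/
noncomputable def η (R : RegularReward) (s : ℝ) (x : ℝ) : ℝ :=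
  ∑' i : ℕ, (R.kbar s)^[i] x

end RegularReward

/-- **Properties of `κ̄_s`** (Proposition 6, parts 1–2). For a regular reward function
and `s > 1`: (i) `0 ≤ κ̄_s(x) < x` for every `x > 0`; (ii) `κ̄_s` is continuous,
nondecreasing, and convex on `[0, ∞)`. -/
theorem kbar_properties (R : RegularReward) (s : ℝ) (hs : 1 < s) :
    (∀ x : ℝ, 0 < x → 0 ≤ R.kbar s x ∧ R.kbar s x < x) ∧
      ContinuousOn (R.kbar s) (Ici (0 : ℝ)) ∧
      MonotoneOn (R.kbar s) (Ici (0 : ℝ)) ∧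
      ConvexOn ℝ (Ici (0 : ℝ)) (R.kbar s) := by
  have hs1 : (1 : ℝ) ≤ s := hs.le
  set τ := R.τ s with hτdef
  have hτ0 : 0 ≤ τ := R.τ_nonneg s hs1
  have hr'0 : 0 < R.r' 0 := R.deriv_pos 0 le_rfl
  -- τ > 0
  have hτpos : 0 < τ := by
    rcases hτ0.lt_or_eq with h | h
    · exact h
    · exfalso
      have := R.τ_spec s hs1
      rw [← hτdef, ← h] at this
      -- r' τ = r' 0 / s with τ = 0 gives r' 0 = r' 0 / s
      have : R.r' 0 = R.r' 0 / s := by rw [← this]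
      rw [eq_div_iff (by positivity : s ≠ 0)] at this
      nlinarith [hr'0]
  -- κ s τ = 0
  have hκτ : R.κ s τ = 0 := by
    have h1 : R.r' (R.κ s τ) = s * R.r' τ := R.κ_spec s hs1 τ le_rfl
    have h2 : R.r' τ = R.r' 0 / s := R.τ_spec s hs1
    have hsne : s ≠ 0 := by positivity
    have h3 : R.r' (R.κ s τ) = R.r' 0 := by rw [h1, h2]; field_simp
    exact R.deriv_strictAnti.injOn (mem_Ici.mpr (R.κ_nonneg s hs1 τ le_rfl))
      (mem_Ici.mpr le_rfl) h3
  -- κ is monotone on Ici τ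
  have hκmono : MonotoneOn (R.κ s) (Ici τ) := by
    intro a ha b hb hab
    by_contra hlt
    push_neg at hlt
    have ha0 : (0:ℝ) ≤ a := le_trans hτ0 ha
    have hb0 : (0:ℝ) ≤ b := le_trans hτ0 hb
    have hκa : (0:ℝ) ≤ R.κ s a := R.κ_nonneg s hs1 a ha
    have hκb : (0:ℝ) ≤ R.κ s b := R.κ_nonneg s hs1 b hb
    have h1 : R.r' (R.κ s a) < R.r' (R.κ s b) := R.deriv_strictAnti hκb hκa hlt
    rw [R.κ_spec s hs1 a ha, R.κ_spec s hs1 b hb] at h1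
    have h2 : R.r' b ≤ R.r' a := by
      rcases hab.lt_or_eq with h | h
      · exact (R.deriv_strictAnti ha0 hb0 h).le
      · rw [h]
    nlinarith [hs.le.trans_lt' one_pos]
  -- part (i)
  have hpart1 : ∀ x : ℝ, 0 < x → 0 ≤ R.kbar s x ∧ R.kbar s x < x := by
    intro x hx
    have hm : τ ≤ max x τ := le_max_right _ _
    refine ⟨R.κ_nonneg s hs1 _ hm, ?_⟩
    rcases le_or_gt τ x with h | h
    · -- max x τ = x
      have hmx : max x τ = x := max_eq_left h
      unfold RegularReward.kbar
      rw [← hτdef, hmx]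
      by_contra hge
      push_neg at hge
      have hκx : (0:ℝ) ≤ R.κ s x := R.κ_nonneg s hs1 x h
      have h1 : R.r' (R.κ s x) = s * R.r' x := R.κ_spec s hs1 x h
      have hrx : 0 < R.r' x := R.deriv_pos x hx.le
      have h2 : R.r' x < s * R.r' x := by nlinarith
      rw [← h1] at h2
      -- r' x < r' (κ s x), with x ≤ κ s x contradicts antitonicity
      rcases hge.lt_or_eq with hlt | heq
      · have := R.deriv_strictAnti hx.le hκx hlt
        linarith
      · rw [← heq] at h2; linarith
    · have hmx : max x τ = τ := max_eq_right h.le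
      unfold RegularReward.kbar
      rw [← hτdef, hmx, hκτ]
      exact hx
  -- monotone
  have hmono : MonotoneOn (R.kbar s) (Ici (0 : ℝ)) := by
    intro a _ b _ hab
    exact hκmono (mem_Ici.mpr (le_max_right _ _)) (mem_Ici.mpr (le_max_right _ _))
      (max_le_max hab le_rfl)
  -- convex
  have hconv : ConvexOn ℝ (Ici (0 : ℝ)) (R.kbar s) := by
    refine ⟨convex_Ici 0, ?_⟩
    intro x hx y hy a b ha hb hab
    have hmx : τ ≤ max x τ := le_max_right _ _
    have hmy : τ ≤ max y τ := le_max_right _ _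
    have hcomb : τ ≤ a * max x τ + b * max y τ := by nlinarith [le_max_right x τ, le_max_right y τ]
    have hle : max (a * x + b * y) τ ≤ a * max x τ + b * max y τ := by
      apply max_le _ hcomb
      have := le_max_left x τ
      have := le_max_left y τ
      nlinarith
    calc R.kbar s (a * x + b * y) = R.κ s (max (a * x + b * y) τ) := rfl
      _ ≤ R.κ s (a * max x τ + b * max y τ) :=
          hκmono (mem_Ici.mpr (le_max_right _ _)) hcomb hle
      _ ≤ a * R.κ s (max x τ) + b * R.κ s (max y τ) :=
          (R.κ_convex s hs).2 hmx hmy ha hb hab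
      _ = a * R.kbar s x + b * R.kbar s y := rfl
  -- continuity
  have hcont : ContinuousOn (R.kbar s) (Ici (0 : ℝ)) := by
    have hint : ContinuousOn (R.kbar s) (Ioi (0 : ℝ)) := by
      have := hconv.continuousOn_interior
      rwa [interior_Ici] at this
    intro x hx
    rcases (mem_Ici.mp hx).lt_or_eq with hxpos | hxzero
    · exact ((hint x hxpos).continuousAt (Ioi_mem_nhds hxpos)).continuousWithinAt
    · -- x = 0 : kbar is locally the constant 0
      rw [← hxzero]
      have heq : ∀ᶠ y in nhdsWithin (0:ℝ) (Ici 0), R.kbar s y = 0 := by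
        filter_upwards [nhdsWithin_le_nhds (Iio_mem_nhds hτpos)] with y hy
        have : max y τ = τ := max_eq_right (le_of_lt hy)
        unfold RegularReward.kbar
        rw [← hτdef, this, hκτ]
      have h0 : R.kbar s 0 = 0 := by
        unfold RegularReward.kbar
        rw [← hτdef, max_eq_right hτ0, hκτ]
      have : ContinuousWithinAt (fun _ : ℝ => (0:ℝ)) (Ici 0) 0 := continuousWithinAt_const
      exact this.congr_of_eventuallyEq heq h0
  exact ⟨hpart1, hcont, hmono, hconv⟩
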